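/- Let k be a field of characteristic different from 2, V a finite-dimensional k-vector space of dimension n, and Q a quadratic form on V. Then the Clifford algebra CliffordAlgebra Q is finite-dimensional over k of dimension 2^n. -/

import Mathlib

noncomputable section CliffordBasisAux

open CliffordAlgebra

variable {k : Type*} [Field k] {V : Type*} [AddCommGroup V] [Module k V]
variable {n : ℕ} (b : Module.Basis (Fin n) k V)

/-- Product of `ι` of basis vectors along a list, in the exterior algebra. -/
def eL (l : List (Fin n)) : ExteriorAlgebra k V :=
  (l.map (fun i => ExteriorAlgebra.ι k (b i))).prod

@[simp] lemma eL_nil : eL b ([] : List (Fin n)) = 1 := rfl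

@[simp] lemma eL_cons (i : Fin n) (l : List (Fin n)) :
    eL b (i :: l) = ExteriorAlgebra.ι k (b i) * eL b l := by
  simp [eL]

/-- The candidate basis family, indexed by finsets. -/
def eF (s : Finset (Fin n)) : ExteriorAlgebra k V := eL b (s.sort (· ≤ ·))

/-- Spanning key lemma. -/
lemma iota_mul_eL_mem (l : List (Fin n)) (hl : l.Pairwise (· < ·)) (i : Fin n) :
    ExteriorAlgebra.ι k (b i) * eL b l ∈
      Submodule.span k {x | ∃ t : List (Fin n), t.Pairwise (· < ·) ∧
        (∀ a ∈ t, ∃ c ∈ i :: l, c ≤ a) ∧ x = eL b t} := by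
  induction l generalizing i with
  | nil =>
    refine Submodule.subset_span ⟨[i], ?_, ?_, by simp⟩ <;> simp
  | cons j l' ih =>
    rcases lt_trichotomy i j with hij | rfl | hij
    · refine Submodule.subset_span ⟨i :: j :: l', ?_, ?_, by simp⟩
      · exact List.pairwise_cons.2 ⟨fun a ha => by
          rcases List.mem_cons.1 ha with rfl | ha
          · exact hij
          · exact hij.trans (List.rel_of_pairwise_cons hl ha), hl⟩
      · intro a ha
        rcases List.mem_cons.1 ha with rfl | ha
        · exact ⟨a, by simp, le_rfl⟩
        · exact ⟨a, by simp [ha], le_rfl⟩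
    · rw [eL_cons, ← mul_assoc, ExteriorAlgebra.ι_sq_zero, zero_mul]
      exact Submodule.zero_mem _
    · -- i > j : anticommute
      have hanti : ExteriorAlgebra.ι k (b i) * ExteriorAlgebra.ι k (b j)
          = - (ExteriorAlgebra.ι k (b j) * ExteriorAlgebra.ι k (b i)) := by
        exact eq_neg_of_add_eq_zero_left (ExteriorAlgebra.ι_add_mul_swap (b i) (b j))
      have hl' : l'.Pairwise (· < ·) := (List.pairwise_cons.1 hl).2
      have hmem := ih hl' i
      rw [eL_cons, ← mul_assoc, hanti, neg_mul, mul_assoc]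
      refine neg_mem ?_
      have hmap : Submodule.map (LinearMap.mulLeft k (ExteriorAlgebra.ι k (b j)))
          (Submodule.span k {x | ∃ t : List (Fin n), t.Pairwise (· < ·) ∧
            (∀ a ∈ t, ∃ c ∈ i :: l', c ≤ a) ∧ x = eL b t}) ≤
          Submodule.span k {x | ∃ t : List (Fin n), t.Pairwise (· < ·) ∧
            (∀ a ∈ t, ∃ c ∈ i :: j :: l', c ≤ a) ∧ x = eL b t} := by
        rw [Submodule.map_span, Submodule.span_le]
        rintro _ ⟨_, ⟨t, ht, hbd, rfl⟩, rfl⟩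
        have hjt : ∀ a ∈ t, j < a := by
          intro a ha
          obtain ⟨c, hc, hca⟩ := hbd a ha
          rcases List.mem_cons.1 hc with rfl | hc
          · exact lt_of_lt_of_le hij hca
          · exact lt_of_lt_of_le ((List.pairwise_cons.1 hl).1 c hc) hca
        refine Submodule.subset_span ⟨j :: t, List.pairwise_cons.2 ⟨hjt, ht⟩, ?_, by simp⟩
        intro a ha
        rcases List.mem_cons.1 ha with rfl | ha
        · exact ⟨a, by simp, le_rfl⟩
        · exact ⟨j, by simp, (hjt a ha).le⟩
      exact hmap ⟨_, hmem, rfl⟩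

lemma sorted_eL_mem_range (t : List (Fin n)) (ht : t.Pairwise (· < ·)) :
    eL b t ∈ Set.range (eF b) := by
  refine ⟨t.toFinset, ?_⟩
  rw [eF, (List.toFinset_sort (· ≤ ·) ht.nodup).2 (ht.imp le_of_lt)]

lemma iota_mul_mem_span (i : Fin n) (x : ExteriorAlgebra k V)
    (hx : x ∈ Submodule.span k (Set.range (eF b))) :
    ExteriorAlgebra.ι k (b i) * x ∈ Submodule.span k (Set.range (eF b)) := by
  have hmap : Submodule.map (LinearMap.mulLeft k (ExteriorAlgebra.ι k (b i)))
      (Submodule.span k (Set.range (eF b))) ≤ Submodule.span k (Set.range (eF b)) := by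
    rw [Submodule.map_span, Submodule.span_le]
    rintro _ ⟨_, ⟨s, rfl⟩, rfl⟩
    have h1 := iota_mul_eL_mem b (s.sort (· ≤ ·)) ((List.sortedLT_iff_pairwise.1 (Finset.sortedLT_sort s))) i
    refine Submodule.span_le.2 ?_ h1
    rintro _ ⟨t, ht, _, rfl⟩
    exact Submodule.subset_span (sorted_eL_mem_range b t ht)
  exact hmap ⟨_, hx, rfl⟩

lemma span_eF_eq_top : Submodule.span k (Set.range (eF b)) = ⊤ := by
  rw [eq_top_iff]
  rintro x -
  induction x using CliffordAlgebra.induction with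
  | algebraMap r =>
    rw [Algebra.algebraMap_eq_smul_one]
    refine Submodule.smul_mem _ _ (Submodule.subset_span ⟨∅, ?_⟩)
    simp [eF]
  | ι m =>
    rw [← Module.Basis.sum_repr b m, map_sum]
    refine Submodule.sum_mem _ fun i _ => ?_
    rw [map_smul]
    refine Submodule.smul_mem _ _ (Submodule.subset_span ⟨{i}, ?_⟩)
    simp [eF]
  | mul x y hx hy =>
    -- reduce to multiplication by generators
    have key : ∀ l : List (Fin n), ∀ z ∈ Submodule.span k (Set.range (eF b)),
        eL b l * z ∈ Submodule.span k (Set.range (eF b)) := by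
      intro l
      induction l with
      | nil => intro z hz; simpa using hz
      | cons i l' ih =>
        intro z hz
        rw [eL_cons, mul_assoc]
        exact iota_mul_mem_span b i _ (ih z hz)
    have hmap : Submodule.map (LinearMap.mulRight k y)
        (Submodule.span k (Set.range (eF b))) ≤ Submodule.span k (Set.range (eF b)) := by
      rw [Submodule.map_span, Submodule.span_le]
      rintro _ ⟨_, ⟨s, rfl⟩, rfl⟩
      exact key (s.sort (· ≤ ·)) y hy
    exact hmap ⟨x, hx, rfl⟩
  | add x y hx hy => exact Submodule.add_mem _ hx hy

/-! ### Linear independence via contractions -/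

/-- Iterated contraction. -/
def contr : List (Fin n) → (ExteriorAlgebra k V →ₗ[k] ExteriorAlgebra k V)
  | [] => LinearMap.id
  | (i :: s) => (contr s).comp (CliffordAlgebra.contractLeft (Q := (0 : QuadraticForm k V))
      (b.coord i))

lemma contract_eL_of_not_mem (i : Fin n) (t : List (Fin n)) (ht : ∀ a ∈ t, a ≠ i) :
    CliffordAlgebra.contractLeft (Q := (0 : QuadraticForm k V)) (b.coord i) (eL b t) = 0 := by
  induction t with
  | nil => simpa using CliffordAlgebra.contractLeft_one (0 : QuadraticForm k V) (b.coord i)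
  | cons j t' ih =>
    rw [eL_cons, CliffordAlgebra.contractLeft_ι_mul,
      ih (fun a ha => ht a (List.mem_cons_of_mem _ ha)), mul_zero, sub_zero,
      Module.Basis.coord_apply, Module.Basis.repr_self, Finsupp.single_apply,
      if_neg (ht j List.mem_cons_self), zero_smul]

lemma contract_eL (i : Fin n) (t : List (Fin n)) (ht : t.Pairwise (· < ·)) :
    CliffordAlgebra.contractLeft (Q := (0 : QuadraticForm k V)) (b.coord i) (eL b t) =
      if i ∈ t then ((-1 : k) ^ (t.idxOf i)) • eL b (t.erase i) else 0 := by
  induction t with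
  | nil => simpa using CliffordAlgebra.contractLeft_one (0 : QuadraticForm k V) (b.coord i)
  | cons j t' ih =>
    rcases eq_or_ne i j with rfl | hij
    · have hnot : ∀ a ∈ t', a ≠ i := fun a ha => ((List.pairwise_cons.1 ht).1 a ha).ne'
      rw [eL_cons, CliffordAlgebra.contractLeft_ι_mul, contract_eL_of_not_mem b i t' hnot,
        mul_zero, sub_zero, Module.Basis.coord_apply, Module.Basis.repr_self, Finsupp.single_apply, if_pos rfl,
        if_pos List.mem_cons_self]
      simp
    · have ht' : t'.Pairwise (· < ·) := (List.pairwise_cons.1 ht).2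
      rw [eL_cons, CliffordAlgebra.contractLeft_ι_mul, ih ht', Module.Basis.coord_apply,
        Module.Basis.repr_self, Finsupp.single_apply, if_neg (fun h => hij h.symm), zero_smul, zero_sub]
      by_cases hmem : i ∈ t'
      · rw [if_pos hmem, if_pos (List.mem_cons_of_mem _ hmem)]
        rw [List.idxOf_cons_ne _ (fun h => hij h.symm), List.erase_cons_tail]
        · rw [eL_cons, mul_smul_comm, ← neg_smul, pow_succ, mul_comm, neg_one_mul]
        · simpa using fun h => hij h.symm
      · rw [if_neg hmem, if_neg (by simp [hij, hmem]), mul_zero, neg_zero]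

lemma algebraMapInv_eL (t : List (Fin n)) :
    ExteriorAlgebra.algebraMapInv (eL b t) = if t = [] then (1 : k) else 0 := by
  cases t with
  | nil => simp
  | cons j t' =>
    rw [eL_cons, map_mul, ExteriorAlgebra.algebraMapInv, ExteriorAlgebra.lift_ι_apply,
      LinearMap.zero_apply, zero_mul, if_neg (by simp)]

lemma sorted_eq_of_toFinset_eq {s t : List (Fin n)} (hs : s.Pairwise (· < ·))
    (ht : t.Pairwise (· < ·)) (h : s.toFinset = t.toFinset) : s = t := by
  rw [← (List.toFinset_sort (· ≤ ·) hs.nodup).2 (hs.imp le_of_lt),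
    ← (List.toFinset_sort (· ≤ ·) ht.nodup).2 (ht.imp le_of_lt), h]

lemma phi_eL (s : List (Fin n)) (hs : s.Pairwise (· < ·)) :
    ∀ t : List (Fin n), t.Pairwise (· < ·) →
      ExteriorAlgebra.algebraMapInv (contr b s (eL b t)) = if s = t then (1 : k) else 0 := by
  induction s with
  | nil =>
    intro t ht
    rw [contr]
    simpa using (algebraMapInv_eL b t).trans (by simp [eq_comm])
  | cons i s' ih =>
    intro t ht
    have hs' : s'.Pairwise (· < ·) := (List.pairwise_cons.1 hs).2
    rw [contr, LinearMap.comp_apply, contract_eL b i t ht]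
    by_cases hmem : i ∈ t
    · rw [if_pos hmem, map_smul, map_smul, ih hs' (t.erase i) (ht.erase i)]
      have htf : (t.erase i).toFinset = t.toFinset.erase i := by
        ext a
        simp [List.Nodup.mem_erase_iff ht.nodup]
      by_cases heq : i :: s' = t
      · subst heq
        have : i ∉ s' := fun h => lt_irrefl i ((List.pairwise_cons.1 hs).1 i h)
        rw [if_pos rfl, List.erase_cons_head, if_pos rfl, List.idxOf_cons_self]
        simp
      · rw [if_neg heq, if_neg, smul_zero]
        intro h
        apply heq
        apply sorted_eq_of_toFinset_eq hs ht
        have hi : i ∉ s' := fun h' => lt_irrefl i ((List.pairwise_cons.1 hs).1 i h')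
        rw [List.toFinset_cons, h, htf, Finset.insert_erase (by simpa using hmem)]
    · rw [if_neg hmem, map_zero, map_zero, if_neg]
      rintro rfl
      exact hmem List.mem_cons_self

lemma eF_linearIndependent : LinearIndependent k (eF b) := by
  rw [Fintype.linearIndependent_iff]
  intro g hg s₀
  have hΦ := congrArg (fun x => ExteriorAlgebra.algebraMapInv
      (contr b (s₀.sort (· ≤ ·)) x)) hg
  simp only [map_sum, map_smul, map_zero] at hΦ
  have : ∀ s : Finset (Fin n),
      ExteriorAlgebra.algebraMapInv (contr b (s₀.sort (· ≤ ·)) (eF b s)) =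
        if s₀ = s then (1 : k) else 0 := by
    intro s
    rw [eF, phi_eL b _ ((List.sortedLT_iff_pairwise.1 (Finset.sortedLT_sort s₀))) _ ((List.sortedLT_iff_pairwise.1 (Finset.sortedLT_sort s)))]
    by_cases h : s₀ = s
    · rw [if_pos (by rw [h]), if_pos h]
    · rw [if_neg (fun hh => h (by simpa using congrArg List.toFinset hh)), if_neg h]
  simp only [this, smul_eq_mul, mul_ite, mul_one, mul_zero] at hΦ
  rwa [Finset.sum_ite_eq (Finset.univ) s₀ g, if_pos (Finset.mem_univ _)] at hΦ

/-- The basis of the exterior algebra indexed by finsets. -/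
def exteriorBasis : Module.Basis (Finset (Fin n)) k (ExteriorAlgebra k V) :=
  Module.Basis.mk (eF_linearIndependent b) (by rw [span_eF_eq_top])

end CliffordBasisAux

/-- Over a field of characteristic different from two, the Clifford algebra of a quadratic
form on an `n`-dimensional vector space is finite dimensional of dimension `2 ^ n`. -/
theorem clifford_finrank
    {k : Type*} [Field k] (h2 : (2 : k) ≠ 0)
    {V : Type*} [AddCommGroup V] [Module k V] [FiniteDimensional k V]
    (n : ℕ) (hn : Module.finrank k V = n) (Q : QuadraticForm k V) :
    FiniteDimensional k (CliffordAlgebra Q) ∧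
      Module.finrank k (CliffordAlgebra Q) = 2 ^ n := by
  letI : Invertible (2 : k) := invertibleOfNonzero h2
  let b : Module.Basis (Fin n) k V := Module.finBasisOfFinrankEq k V hn
  let B : Module.Basis (Finset (Fin n)) k (ExteriorAlgebra k V) := exteriorBasis b
  let e : CliffordAlgebra Q ≃ₗ[k] ExteriorAlgebra k V := CliffordAlgebra.equivExterior Q
  let B' : Module.Basis (Finset (Fin n)) k (CliffordAlgebra Q) := B.map e.symm
  have hfd : FiniteDimensional k (CliffordAlgebra Q) := B'.finiteDimensional_of_finite
  refine ⟨hfd, ?_⟩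
  rw [Module.finrank_eq_card_basis B', Fintype.card_finset, Fintype.card_fin]
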